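/- Let α > 2β > 1, let H = ℓ², λ_n = (n+1)^α, and x*_n = (n+1)^{−β}, and set φ₀(x) = ⟨x, x*⟩². Then for every x ∈ H, inf_{y∈H} { φ₀(y) + (1/(2t)) ∑_n λ_n⁻¹ (x_n − y_n)² } → 0 as t → 0⁺. In particular, the Lax–Oleinik value does not converge to φ₀(x) whenever ⟨x,x*⟩ ≠ 0. -/

import Mathlib

set_option maxHeartbeats 1000000

open Filter Set
open scoped Topology

theorem stmt_8 (α β : ℝ) (hβ : 1 < 2 * β) (hαβ : 2 * β < α) :
    (∀ x : lp (fun _ : ℕ => ℝ) 2,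
      Tendsto (fun t : ℝ =>
          ⨅ y : lp (fun _ : ℕ => ℝ) 2,
            ((∑' n : ℕ, y n * ((n : ℝ) + 1) ^ (-β)) ^ 2 +
              (1 / (2 * t)) * ∑' n : ℕ, (((n : ℝ) + 1) ^ α)⁻¹ * (x n - y n) ^ 2))
        (𝓝[>] (0:ℝ)) (𝓝 0)) ∧
    ∀ x : lp (fun _ : ℕ => ℝ) 2, (∑' n : ℕ, x n * ((n : ℝ) + 1) ^ (-β)) ≠ 0 →
      ¬ Tendsto (fun t : ℝ =>
          ⨅ y : lp (fun _ : ℕ => ℝ) 2,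
            ((∑' n : ℕ, y n * ((n : ℝ) + 1) ^ (-β)) ^ 2 +
              (1 / (2 * t)) * ∑' n : ℕ, (((n : ℝ) + 1) ^ α)⁻¹ * (x n - y n) ^ 2))
        (𝓝[>] (0:ℝ)) (𝓝 ((∑' n : ℕ, x n * ((n : ℝ) + 1) ^ (-β)) ^ 2)) := by
  -- summability facts
  have hx2 : ∀ x : lp (fun _ : ℕ => ℝ) 2, Summable fun n : ℕ => (x n) ^ 2 := by
    intro x
    have h := (memℓp_gen_iff (p := 2) (by norm_num)).1 (lp.memℓp x)
    have h2 : (fun n : ℕ => ‖x n‖ ^ (2 : ENNReal).toReal) = fun n : ℕ => (x n) ^ 2 := by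
      funext n
      rw [show (2 : ENNReal).toReal = ((2 : ℕ) : ℝ) by norm_num, Real.rpow_natCast]
      simp [Real.norm_eq_abs, sq_abs]
    rwa [h2] at h
  have hw2 : Summable fun n : ℕ => (((n : ℝ) + 1) ^ (-β)) ^ 2 := by
    have h0 : Summable fun n : ℕ => ((n : ℝ)) ^ (-(2 * β)) :=
      Real.summable_nat_rpow.2 (by linarith)
    have h1 : Summable fun n : ℕ => ((n + 1 : ℕ) : ℝ) ^ (-(2 * β)) :=
      (summable_nat_add_iff 1).2 h0
    apply h1.congr
    intro n
    have hpos : (0 : ℝ) < (n : ℝ) + 1 := by positivity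
    push_cast
    rw [sq, ← Real.rpow_add hpos]
    ring_nf
  have hxw : ∀ x : lp (fun _ : ℕ => ℝ) 2,
      Summable fun n : ℕ => x n * ((n : ℝ) + 1) ^ (-β) := by
    intro x
    have hb : Summable fun n : ℕ => ((x n) ^ 2 + (((n : ℝ) + 1) ^ (-β)) ^ 2) / 2 :=
      ((hx2 x).add hw2).div_const 2
    have hle : ∀ n : ℕ, |x n * ((n : ℝ) + 1) ^ (-β)| ≤
        ((x n) ^ 2 + (((n : ℝ) + 1) ^ (-β)) ^ 2) / 2 := by
      intro n
      rw [abs_mul]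
      nlinarith [sq_nonneg (|x n| - |((n : ℝ) + 1) ^ (-β)|), sq_abs (x n),
        sq_abs (((n : ℝ) + 1) ^ (-β)), abs_nonneg (x n), abs_nonneg (((n : ℝ) + 1) ^ (-β))]
    exact Summable.of_abs (Summable.of_nonneg_of_le (fun n => abs_nonneg _) hle hb)
  -- the key: for t > 0 the infimum equals 0
  have key : ∀ (x : lp (fun _ : ℕ => ℝ) 2) (t : ℝ), 0 < t →
      (⨅ y : lp (fun _ : ℕ => ℝ) 2,
        ((∑' n : ℕ, y n * ((n : ℝ) + 1) ^ (-β)) ^ 2 +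
          (1 / (2 * t)) * ∑' n : ℕ, (((n : ℝ) + 1) ^ α)⁻¹ * (x n - y n) ^ 2)) = 0 := by
    intro x t ht
    set F : lp (fun _ : ℕ => ℝ) 2 → ℝ := fun y =>
      ((∑' n : ℕ, y n * ((n : ℝ) + 1) ^ (-β)) ^ 2 +
        (1 / (2 * t)) * ∑' n : ℕ, (((n : ℝ) + 1) ^ α)⁻¹ * (x n - y n) ^ 2) with hF
    have hFnn : ∀ y, 0 ≤ F y := by
      intro y
      apply add_nonneg (sq_nonneg _)
      apply mul_nonneg (by positivity)
      exact tsum_nonneg fun n => mul_nonneg (by positivity) (sq_nonneg _)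
    have hbdd : BddBelow (Set.range F) := ⟨0, by rintro _ ⟨y, rfl⟩; exact hFnn y⟩
    refine le_antisymm ?_ (le_ciInf hFnn)
    -- construct test elements
    set c : ℝ := ∑' n : ℕ, x n * ((n : ℝ) + 1) ^ (-β) with hc
    set s : ℕ → ℝ := fun N => -(c * ((N : ℝ) + 1) ^ β) with hs
    set y : ℕ → lp (fun _ : ℕ => ℝ) 2 := fun N =>
      x + (s N) • lp.single 2 N (1 : ℝ) with hy
    have hyapp : ∀ N n, (y N) n = x n + (s N) * (lp.single (E := fun _ : ℕ => ℝ) 2 N (1 : ℝ)) n := by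
      intro N n
      rw [hy]
      simp [lp.coeFn_add, lp.coeFn_smul, Pi.add_apply, Pi.smul_apply, smul_eq_mul]
      rfl
    have hy_self : ∀ N, (y N) N = x N + s N := by
      intro N; rw [hyapp, lp.single_apply_self, mul_one]
    have hy_ne : ∀ N n, n ≠ N → (y N) n = x n := by
      intro N n hn; rw [hyapp, lp.single_apply_ne 2 N _ hn, mul_zero, add_zero]
    -- the value of F at y N
    have hFval : ∀ N, F (y N) = (1 / (2 * t)) * (c ^ 2 * ((N : ℝ) + 1) ^ (2 * β - α)) := by
      intro N
      have hposN : (0 : ℝ) < (N : ℝ) + 1 := by positivity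
      -- first tsum vanishes
      have hsum1 : (∑' n : ℕ, (y N) n * ((n : ℝ) + 1) ^ (-β)) = 0 := by
        have hsplit : ∀ n : ℕ, (y N) n * ((n : ℝ) + 1) ^ (-β) =
            x n * ((n : ℝ) + 1) ^ (-β) +
            (if n = N then s N * ((N : ℝ) + 1) ^ (-β) else 0) := by
          intro n
          by_cases h : n = N
          · subst h
            simp [hy_self n, add_mul]
          · simp [hy_ne N n h, h]
        have hg : Summable (fun n : ℕ => if n = N then s N * ((N : ℝ) + 1) ^ (-β) else 0) := by
          apply summable_of_ne_finset_zero (s := {N})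
          intro n hn
          simp only [Finset.mem_singleton] at hn
          simp [hn]
        rw [tsum_congr hsplit, Summable.tsum_add (hxw x) hg, tsum_ite_eq, ← hc]
        have h1 : ((N : ℝ) + 1) ^ β * ((N : ℝ) + 1) ^ (-β) = 1 := by
          rw [← Real.rpow_add hposN]; simp
        simp only [hs]
        rw [neg_mul, mul_assoc, h1, mul_one, add_neg_cancel]
      -- second tsum
      have hsum2 : (∑' n : ℕ, (((n : ℝ) + 1) ^ α)⁻¹ * (x n - (y N) n) ^ 2) =
          c ^ 2 * ((N : ℝ) + 1) ^ (2 * β - α) := by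
        rw [tsum_eq_single N (by
          intro n hn
          rw [hy_ne N n hn]
          simp)]
        rw [hy_self]
        have h1 : (x N - (x N + s N)) ^ 2 = c ^ 2 * (((N : ℝ) + 1) ^ β) ^ 2 := by
          rw [hs]; ring
        rw [h1]
        have h2 : (((N : ℝ) + 1) ^ β) ^ 2 = ((N : ℝ) + 1) ^ (2 * β) := by
          rw [sq, ← Real.rpow_add hposN]; ring_nf
        have h3 : (((N : ℝ) + 1) ^ α)⁻¹ = ((N : ℝ) + 1) ^ (-α) := by
          rw [← Real.rpow_neg hposN.le]
        rw [h2, h3]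
        rw [show ((N : ℝ) + 1) ^ (2 * β - α) = ((N : ℝ) + 1) ^ (-α) * ((N : ℝ) + 1) ^ (2 * β) by
          rw [← Real.rpow_add hposN]; ring_nf]
        ring
      simp only [hF, hsum1, hsum2]
      ring
    -- the values tend to 0
    have htend : Tendsto (fun N : ℕ => F (y N)) atTop (𝓝 0) := by
      have h1 : Tendsto (fun N : ℕ => ((N : ℝ) + 1) ^ (2 * β - α)) atTop (𝓝 0) := by
        have hbase : Tendsto (fun N : ℕ => (N : ℝ) + 1) atTop atTop :=
          tendsto_atTop_add_const_right atTop 1 tendsto_natCast_atTop_atTop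
        have := (tendsto_rpow_neg_atTop (y := α - 2 * β) (by linarith)).comp hbase
        apply this.congr
        intro N
        simp only [Function.comp_apply]
        ring_nf
      have h2 : Tendsto (fun N : ℕ => (1 / (2 * t)) * (c ^ 2 * ((N : ℝ) + 1) ^ (2 * β - α)))
          atTop (𝓝 0) := by
        have := (h1.const_mul (c ^ 2)).const_mul (1 / (2 * t))
        simpa using this
      exact h2.congr fun N => (hFval N).symm
    exact ge_of_tendsto' htend fun N => ciInf_le hbdd (y N)
  have part1 : ∀ x : lp (fun _ : ℕ => ℝ) 2,
      Tendsto (fun t : ℝ =>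
          ⨅ y : lp (fun _ : ℕ => ℝ) 2,
            ((∑' n : ℕ, y n * ((n : ℝ) + 1) ^ (-β)) ^ 2 +
              (1 / (2 * t)) * ∑' n : ℕ, (((n : ℝ) + 1) ^ α)⁻¹ * (x n - y n) ^ 2))
        (𝓝[>] (0:ℝ)) (𝓝 0) := by
    intro x
    have hev : ∀ᶠ t in 𝓝[>] (0:ℝ), (0 : ℝ) =
        ⨅ y : lp (fun _ : ℕ => ℝ) 2,
          ((∑' n : ℕ, y n * ((n : ℝ) + 1) ^ (-β)) ^ 2 +
            (1 / (2 * t)) * ∑' n : ℕ, (((n : ℝ) + 1) ^ α)⁻¹ * (x n - y n) ^ 2) :=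
      eventually_nhdsWithin_of_forall fun t ht => (key x t ht).symm
    exact Tendsto.congr' hev tendsto_const_nhds
  refine ⟨part1, ?_⟩
  intro x hc hT
  have h0 := part1 x
  have := tendsto_nhds_unique hT h0
  exact hc (by nlinarith [sq_nonneg (∑' n : ℕ, x n * ((n : ℝ) + 1) ^ (-β))])
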